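/- arXiv:2304.03474 — 3 statements merged into one kernel-verified Lean document; each statement's English description precedes it below -/
import Mathlib

section
/- For 0 < α < 1 and 0 ≤ t < r (real numbers with ε > 0, t + ε ≤ r), the integral ∫_{t+ε}^{r} (r - y)^{α-1} (y - t)^{-α-1} dy equals (1/(α ε^α)) · (r - t - ε)^α / (r - t). -/
open MeasureTheory Real

/-- For `0 < α < 1`, `ε > 0`, `0 ≤ t` and `t + ε < r`, the integral
`∫_{t+ε}^{r} (r - y)^{α-1} (y - t)^{-α-1} dy` equals
`(1/(α ε^α)) · (r - t - ε)^α / (r - t)`. -/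
theorem kipriyanov_kernel_integral
    (α ε t r : ℝ) (hα : 0 < α) (hα1 : α < 1) (hε : 0 < ε) (ht : 0 ≤ t)
    (htr : t + ε < r) :
    ∫ y in (t + ε)..r, (r - y) ^ (α - 1) * (y - t) ^ (-α - 1) =
      (1 / (α * ε ^ α)) * ((r - t - ε) ^ α / (r - t)) := by
  have hrt : 0 < r - t := by linarith
  have hc : α * (r - t) ≠ 0 := by positivity
  set F : ℝ → ℝ := fun y => -(1 / (α * (r - t))) * ((r - y) ^ α * (y - t) ^ (-α)) with hF
  have hcont : ContinuousOn F (Set.Icc (t + ε) r) := by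
    apply ContinuousOn.mul continuousOn_const
    apply ContinuousOn.mul
    · exact fun y hy => ((continuousAt_const.sub continuousAt_id).rpow_const
        (Or.inr hα.le)).continuousWithinAt
    · intro y hy
      have hyt : y - t ≠ 0 := by
        have := hy.1; simp only [Set.mem_Icc] at hy; nlinarith [hy.1]
      exact ((continuousAt_id.sub continuousAt_const).rpow_const
        (Or.inl hyt)).continuousWithinAt
  have hderiv : ∀ y ∈ Set.Ioo (t + ε) r,
      HasDerivAt F ((r - y) ^ (α - 1) * (y - t) ^ (-α - 1)) y := by
    intro y hy
    obtain ⟨hy1, hy2⟩ := hy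
    have h1 : 0 < r - y := by linarith
    have h2 : 0 < y - t := by linarith
    have d1 : HasDerivAt (fun y => (r - y) ^ α) (α * (r - y) ^ (α - 1) * (-1)) y := by
      exact (Real.hasDerivAt_rpow_const (Or.inl h1.ne')).comp y
        ((hasDerivAt_const y r).sub (hasDerivAt_id y)) |>.congr_deriv (by ring)
    have d2 : HasDerivAt (fun y => (y - t) ^ (-α)) ((-α) * (y - t) ^ (-α - 1) * 1) y := by
      exact (Real.hasDerivAt_rpow_const (p := -α) (Or.inl h2.ne')).comp y
        ((hasDerivAt_id y).sub (hasDerivAt_const y t)) |>.congr_deriv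
          (g' := (-α) * (y - t) ^ (-α - 1) * 1) (by ring)
    have := ((d1.mul d2).const_mul (-(1 / (α * (r - t)))))
    refine this.congr_deriv ?_
    have e1 : (r - y) ^ α = (r - y) ^ (α - 1) * (r - y) := by
      rw [← Real.rpow_add_one h1.ne']; ring_nf
    have e2 : (y - t) ^ (-α) = (y - t) ^ (-α - 1) * (y - t) := by
      rw [← Real.rpow_add_one h2.ne']; ring_nf
    rw [e1, e2]
    field_simp
    ring
  have hint : IntervalIntegrable (fun y => (r - y) ^ (α - 1) * (y - t) ^ (-α - 1))
      volume (t + ε) r := by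
    have h1 : IntervalIntegrable (fun y => (r - y) ^ (α - 1)) volume (t + ε) r := by
      have := (intervalIntegral.intervalIntegrable_rpow' (a := r - (t + ε)) (b := r - r)
        (r := α - 1) (by linarith)).comp_sub_left r
      simpa using this
    apply h1.mul_continuousOn
    intro y hy
    rw [Set.uIcc_of_le (by linarith)] at hy
    have hyt : y - t ≠ 0 := by
      have := hy.1; simp only [Set.mem_Icc] at hy; nlinarith [hy.1]
    exact ((continuousAt_id.sub continuousAt_const).rpow_const
      (Or.inl hyt)).continuousWithinAt
  rw [intervalIntegral.integral_eq_sub_of_hasDerivAt_of_le (by linarith) hcont hderiv hint]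
  have h0 : (r - r : ℝ) = 0 := by ring
  simp only [hF, h0, Real.zero_rpow hα.ne']
  have hε' : (t + ε - t) = ε := by ring
  rw [hε']
  rw [Real.rpow_neg hε.le]
  have hεα : (0:ℝ) < ε ^ α := Real.rpow_pos_of_pos hε α
  field_simp
  ring
end

section
/- Define K(t) = (sin(απ)/π) · (t₊^α − (t−1)₊^α)/t for t > 0, where x₊ = max(x,0) and α ∈ (0,1). Then K(t) > 0 for all t > 0 and ∫_0^∞ K(t) dt = 1. -/
open MeasureTheory Real

namespace KernelAux

/-- Bernoulli-type bound: for `u ∈ (0,1)`, `1 - (1-u)^α ≤ α * u * (1-u)^(α-1)`. -/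
lemma key_bound (α : ℝ) (hα : 0 < α) (hα1 : α < 1) {u : ℝ} (hu0 : 0 < u) (hu1 : u < 1) :
    1 - (1 - u) ^ α ≤ α * u * (1 - u) ^ (α - 1) := by
  set v := 1 - u with hv
  have hv0 : 0 < v := by simp [hv]; linarith
  have hb : v ^ (1 - α) ≤ 1 + (1 - α) * (v - 1) := by
    have := rpow_one_add_le_one_add_mul_self (s := v - 1) (by linarith) (p := 1 - α)
      (by linarith) (by linarith)
    simpa using this
  have key : v ^ (1 - α) - v ≤ α * (1 - v) := by nlinarith
  have hmul := mul_le_mul_of_nonneg_right key (rpow_nonneg hv0.le (α - 1))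
  have e1 : v ^ (1 - α) * v ^ (α - 1) = 1 := by
    rw [← Real.rpow_add hv0]; norm_num
  have e2 : v * v ^ (α - 1) = v ^ α := by
    nth_rewrite 1 [← Real.rpow_one v]
    rw [← Real.rpow_add hv0]; ring_nf
  calc 1 - v ^ α = (v ^ (1 - α) - v) * v ^ (α - 1) := by rw [sub_mul, e1, e2]
    _ ≤ α * (1 - v) * v ^ (α - 1) := hmul
    _ = α * u * v ^ (α - 1) := by rw [hv]; ring_nf

lemma rpow_neg_int_01 (α : ℝ) (hα : 0 < α) (hα1 : α < 1) :
    IntegrableOn (fun u : ℝ => u ^ (-α)) (Set.Ioo 0 1) :=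
  ((intervalIntegral.intervalIntegrable_rpow' (a := 0) (b := 1) (by linarith : (-1:ℝ) < -α)).1).mono_set
    Set.Ioo_subset_Ioc_self

lemma rpow_one_sub_int_01 (α : ℝ) (hα : 0 < α) (hα1 : α < 1) :
    IntegrableOn (fun u : ℝ => (1 - u) ^ (α - 1)) (Set.Ioo 0 1) := by
  have h := (intervalIntegral.intervalIntegrable_rpow' (a := 0) (b := 1) (by linarith : (-1:ℝ) < α - 1)).comp_sub_left 1
  simp only [sub_zero, sub_self] at h
  exact (h.symm.1).mono_set Set.Ioo_subset_Ioc_self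

lemma g2_integrable (α : ℝ) (hα : 0 < α) (hα1 : α < 1) :
    IntegrableOn (fun u : ℝ => u ^ (-α) * (1 - u) ^ (α - 1)) (Set.Ioo 0 1) := by
  have hbound : IntegrableOn
      (fun u : ℝ => (2:ℝ) ^ (1-α) * u ^ (-α) + (2:ℝ) ^ α * (1 - u) ^ (α - 1)) (Set.Ioo 0 1) :=
    ((rpow_neg_int_01 α hα hα1).const_mul _).add ((rpow_one_sub_int_01 α hα hα1).const_mul _)
  refine Integrable.mono' hbound ?_ ?_
  · refine ContinuousOn.aestronglyMeasurable ?_ measurableSet_Ioo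
    exact (continuousOn_id.rpow_const fun x hx => Or.inl (ne_of_gt hx.1)).mul
      ((continuousOn_const.sub continuousOn_id).rpow_const
        fun x hx => Or.inl (by simp only [Pi.sub_apply, id]; intro h; nlinarith [hx.2]))
  · filter_upwards [ae_restrict_mem measurableSet_Ioo] with u hu
    obtain ⟨hu0, hu1⟩ := hu
    have h1u : (0:ℝ) < 1 - u := by linarith
    have hg2 : (0:ℝ) ≤ u ^ (-α) * (1 - u) ^ (α - 1) :=
      mul_nonneg (rpow_nonneg hu0.le _) (rpow_nonneg h1u.le _)
    rw [Real.norm_of_nonneg hg2]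
    have half : ((1:ℝ)/2) ^ (α-1) = (2:ℝ)^(1-α) ∧ ((1:ℝ)/2) ^ (-α) = (2:ℝ)^α := by
      constructor <;>
      · rw [one_div, ← Real.rpow_neg_one, ← Real.rpow_mul (by norm_num)]
        ring_nf
    rcases le_or_gt u (1/2) with hc | hc
    · have : (1 - u) ^ (α - 1) ≤ (2:ℝ)^(1-α) := by
        rw [← half.1]
        exact Real.rpow_le_rpow_of_nonpos (by norm_num) (by linarith) (by linarith)
      have := mul_le_mul_of_nonneg_left this (rpow_nonneg hu0.le (-α))
      have h2 : (0:ℝ) ≤ (2:ℝ) ^ α * (1 - u) ^ (α - 1) :=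
        mul_nonneg (rpow_nonneg (by norm_num) _) (rpow_nonneg h1u.le _)
      nlinarith [this]
    · have : u ^ (-α) ≤ (2:ℝ)^α := by
        rw [← half.2]
        exact Real.rpow_le_rpow_of_nonpos (by norm_num) hc.le (by linarith)
      have := mul_le_mul_of_nonneg_right this (rpow_nonneg h1u.le (α-1))
      have h2 : (0:ℝ) ≤ (2:ℝ) ^ (1-α) * u ^ (-α) :=
        mul_nonneg (rpow_nonneg (by norm_num) _) (rpow_nonneg hu0.le _)
      nlinarith [this]

lemma g1_integrable (α : ℝ) (hα : 0 < α) (hα1 : α < 1) :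
    IntegrableOn (fun u : ℝ => u ^ (-α - 1) * (1 - (1 - u) ^ α)) (Set.Ioo 0 1) := by
  refine Integrable.mono' ((g2_integrable α hα hα1).const_mul α) ?_ ?_
  · refine ContinuousOn.aestronglyMeasurable ?_ measurableSet_Ioo
    exact (continuousOn_id.rpow_const fun x hx => Or.inl (ne_of_gt hx.1)).mul
      (continuousOn_const.sub ((continuousOn_const.sub continuousOn_id).rpow_const
        fun x hx => Or.inr hα.le))
  · filter_upwards [ae_restrict_mem measurableSet_Ioo] with u hu
    obtain ⟨hu0, hu1⟩ := hu
    have h1u : (0:ℝ) < 1 - u := by linarith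
    have hle1 : (1 - u) ^ α ≤ 1 := Real.rpow_le_one h1u.le (by linarith) hα.le
    have hg1 : (0:ℝ) ≤ u ^ (-α - 1) * (1 - (1 - u) ^ α) :=
      mul_nonneg (rpow_nonneg hu0.le _) (by linarith)
    rw [Real.norm_of_nonneg hg1]
    have key := key_bound α hα hα1 hu0 hu1
    have h2 := mul_le_mul_of_nonneg_left key (rpow_nonneg hu0.le (-α - 1))
    have e : u ^ (-α - 1) * (α * u * (1 - u) ^ (α - 1))
        = α * (u ^ (-α) * (1 - u) ^ (α - 1)) := by
      have : u ^ (-α - 1) * u = u ^ (-α) := by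
        nth_rewrite 2 [← Real.rpow_one u]
        rw [← Real.rpow_add hu0]; ring_nf
      calc u ^ (-α - 1) * (α * u * (1 - u) ^ (α - 1))
          = α * ((u ^ (-α - 1) * u) * (1 - u) ^ (α - 1)) := by ring
        _ = α * (u ^ (-α) * (1 - u) ^ (α - 1)) := by rw [this]
    linarith [h2, e ▸ h2]

lemma G_hasDeriv (α : ℝ) (hα : 0 < α) (hα1 : α < 1) {u : ℝ} (hu0 : 0 < u) (hu1 : u < 1) :
    HasDerivAt (fun u : ℝ => -(u ^ (-α) * (1 - (1 - u) ^ α)) / α)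
      (u ^ (-α - 1) * (1 - (1 - u) ^ α) - u ^ (-α) * (1 - u) ^ (α - 1)) u := by
  have h1u : (0:ℝ) < 1 - u := by linarith
  have h1 : HasDerivAt (fun u : ℝ => u ^ (-α)) (-α * u ^ (-α - 1)) u := by
    simpa using Real.hasDerivAt_rpow_const (p := -α) (Or.inl (ne_of_gt hu0))
  have hd : HasDerivAt (fun u : ℝ => 1 - u) (-1) u := (hasDerivAt_id u).const_sub 1
  have h2' := hd.rpow_const (p := α) (Or.inl (ne_of_gt h1u))
  have h2 : HasDerivAt (fun u : ℝ => 1 - (1 - u) ^ α) (α * (1 - u) ^ (α - 1)) u := by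
    have := h2'.const_sub 1
    exact this.congr_deriv (by ring)
  have h3 := ((h1.mul h2).neg).div_const α
  exact h3.congr_deriv (by field_simp; ring)

lemma ftc_part (α : ℝ) (hα : 0 < α) (hα1 : α < 1) :
    ∫ u in Set.Ioo (0:ℝ) 1,
      (u ^ (-α - 1) * (1 - (1 - u) ^ α) - u ^ (-α) * (1 - u) ^ (α - 1)) = -(1/α) := by
  set f : ℝ → ℝ := fun u => u ^ (-α - 1) * (1 - (1 - u) ^ α) - u ^ (-α) * (1 - u) ^ (α - 1)
    with hf
  set G : ℝ → ℝ := fun u => -(u ^ (-α) * (1 - (1 - u) ^ α)) / α with hG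
  have hfint : IntegrableOn f (Set.Ioo 0 1) :=
    (g1_integrable α hα hα1).sub (g2_integrable α hα hα1)
  set a : ℕ → ℝ := fun n => 1 / (n + 2) with ha
  set b : ℕ → ℝ := fun n => 1 - 1 / (n + 2) with hb
  have ha0 : ∀ n : ℕ, 0 < a n := fun n => by positivity
  have hahalf : ∀ n : ℕ, a n ≤ 1/2 := fun n => by
    have h2 : (0:ℝ) < 2 := by norm_num
    have : (2:ℝ) ≤ n + 2 := by
      have : (0:ℝ) ≤ n := Nat.cast_nonneg n
      linarith
    calc a n = 1 / ((n:ℝ) + 2) := rfl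
      _ ≤ 1 / 2 := one_div_le_one_div_of_le h2 this
  have hab : ∀ n : ℕ, a n ≤ b n := fun n => by
    have := hahalf n; simp only [hb]; linarith
  have hsub : ∀ n : ℕ, Set.Icc (a n) (b n) ⊆ Set.Ioo 0 1 := fun n x hx => by
    constructor
    · exact lt_of_lt_of_le (ha0 n) hx.1
    · have : b n < 1 := by simp only [hb]; have := ha0 n; simp only [ha] at this; linarith
      exact lt_of_le_of_lt hx.2 this
  -- the union is Ioo 0 1
  have hunion : (⋃ n : ℕ, Set.Icc (a n) (b n)) = Set.Ioo 0 1 := by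
    apply Set.Subset.antisymm
    · exact Set.iUnion_subset hsub
    · intro x hx
      obtain ⟨n, hn⟩ := exists_nat_gt (1 / min x (1 - x))
      have hm : 0 < min x (1 - x) := lt_min hx.1 (by linarith [hx.2])
      have hax : 1 / ((n:ℝ) + 2) < min x (1 - x) := by
        rw [div_lt_iff₀ (by positivity)]
        rw [div_lt_iff₀ hm] at hn
        nlinarith [hm.le]
      refine Set.mem_iUnion.2 ⟨n, ?_, ?_⟩
      · exact le_of_lt (lt_of_lt_of_le hax (min_le_left _ _))
      · have := lt_of_lt_of_le hax (min_le_right _ _)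
        simp only [hb]; linarith
  -- integral over each Icc via FTC
  have hInt : ∀ n : ℕ, ∫ u in Set.Icc (a n) (b n), f u = G (b n) - G (a n) := by
    intro n
    have hIcc : Set.uIcc (a n) (b n) = Set.Icc (a n) (b n) := Set.uIcc_of_le (hab n)
    have hderiv : ∀ x ∈ Set.uIcc (a n) (b n), HasDerivAt G (f x) x := by
      intro x hx
      rw [hIcc] at hx
      have := hsub n hx
      exact G_hasDeriv α hα hα1 this.1 this.2
    have hii : IntervalIntegrable f volume (a n) (b n) := by
      rw [intervalIntegrable_iff, Set.uIoc_of_le (hab n)]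
      exact hfint.mono_set ((Set.Ioc_subset_Icc_self).trans (hsub n))
    have := intervalIntegral.integral_eq_sub_of_hasDerivAt hderiv hii
    rw [intervalIntegral.integral_of_le (hab n)] at this
    rw [MeasureTheory.integral_Icc_eq_integral_Ioc]
    exact this
  have hsm : ∀ n : ℕ, MeasurableSet (Set.Icc (a n) (b n)) := fun n => measurableSet_Icc
  have hmono : Monotone fun n : ℕ => Set.Icc (a n) (b n) := by
    intro n m hnm
    have hcast : (n:ℝ) ≤ m := Nat.cast_le.2 hnm
    have hkey : (1:ℝ) / (m + 2) ≤ 1 / (n + 2) :=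
      one_div_le_one_div_of_le (by positivity) (by linarith)
    apply Set.Icc_subset_Icc
    · exact hkey
    · simp only [hb]; linarith
  have htend := tendsto_setIntegral_of_monotone hsm hmono (hunion ▸ hfint)
  rw [hunion] at htend
  -- limits of G at the endpoints
  have hGa : Filter.Tendsto (fun n => G (a n)) Filter.atTop (nhds 0) := by
    have hbnd : ∀ n : ℕ, |G (a n)| ≤ (a n) ^ (1 - α) * (1 - a n) ^ (α - 1) := by
      intro n
      have h0 : 0 < a n := ha0 n
      have h1 : a n < 1 := lt_of_le_of_lt (hahalf n) (by norm_num)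
      have h1u : (0:ℝ) < 1 - a n := by linarith
      have hle1 : (1 - a n) ^ α ≤ 1 := Real.rpow_le_one h1u.le (by linarith) hα.le
      have hnonneg : 0 ≤ (a n) ^ (-α) * (1 - (1 - a n) ^ α) :=
        mul_nonneg (rpow_nonneg h0.le _) (by linarith)
      have hGval : G (a n) = -((a n) ^ (-α) * (1 - (1 - a n) ^ α)) / α := rfl
      rw [hGval, abs_div, abs_neg, abs_of_nonneg hnonneg, abs_of_pos hα]
      rw [div_le_iff₀ hα]
      calc (a n) ^ (-α) * (1 - (1 - a n) ^ α)
          ≤ (a n) ^ (-α) * (α * a n * (1 - a n) ^ (α - 1)) :=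
            mul_le_mul_of_nonneg_left (key_bound α hα hα1 h0 h1) (rpow_nonneg h0.le _)
        _ = (a n) ^ (1 - α) * (1 - a n) ^ (α - 1) * α := by
            have : (a n) ^ (-α) * a n = (a n) ^ (1 - α) := by
              nth_rewrite 2 [← Real.rpow_one (a n)]
              rw [← Real.rpow_add h0]; ring_nf
            calc (a n) ^ (-α) * (α * a n * (1 - a n) ^ (α - 1))
                = ((a n) ^ (-α) * a n) * (1 - a n) ^ (α - 1) * α := by ring
              _ = (a n) ^ (1 - α) * (1 - a n) ^ (α - 1) * α := by rw [this]
    have hato : Filter.Tendsto a Filter.atTop (nhds 0) := by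
      simp only [ha]
      have : Filter.Tendsto (fun n : ℕ => ((n:ℝ) + 2)) Filter.atTop Filter.atTop :=
        Filter.tendsto_atTop_add_const_right _ 2 tendsto_natCast_atTop_atTop
      exact this.inv_tendsto_atTop.congr (fun n => by simp [one_div])
    have hcont : Filter.Tendsto (fun x : ℝ => x ^ (1 - α) * (1 - x) ^ (α - 1))
        (nhds 0) (nhds 0) := by
      have c1 : ContinuousAt (fun x : ℝ => x ^ (1 - α)) 0 :=
        Real.continuousAt_rpow_const 0 (1 - α) (Or.inr (by linarith))
      have c2 : ContinuousAt (fun x : ℝ => (1 - x) ^ (α - 1)) 0 := by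
        apply ContinuousAt.rpow_const (by fun_prop)
        left; norm_num
      have hc := c1.mul c2
      have hne : (1 - α) ≠ 0 := by intro h; linarith
      have h00 : (0:ℝ) ^ (1 - α) * (1 - (0:ℝ)) ^ (α - 1) = 0 := by
        rw [Real.zero_rpow hne]; ring
      rw [ContinuousAt] at hc
      simp only [Pi.mul_apply, h00] at hc
      exact hc
    have hbig : Filter.Tendsto (fun n => (a n) ^ (1 - α) * (1 - a n) ^ (α - 1))
        Filter.atTop (nhds 0) := hcont.comp hato
    have := squeeze_zero_norm (f := fun n => G (a n)) (fun n => by simpa [Real.norm_eq_abs] using hbnd n) hbig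
    exact this
  have hGb : Filter.Tendsto (fun n => G (b n)) Filter.atTop (nhds (-(1/α))) := by
    have hbto : Filter.Tendsto b Filter.atTop (nhds 1) := by
      simp only [hb]
      have : Filter.Tendsto (fun n : ℕ => ((n:ℝ) + 2)) Filter.atTop Filter.atTop :=
        Filter.tendsto_atTop_add_const_right _ 2 tendsto_natCast_atTop_atTop
      have h2 := this.inv_tendsto_atTop
      have := h2.const_sub 1
      simpa using this
    have hGcont : ContinuousAt G 1 := by
      have c1 : ContinuousAt (fun x : ℝ => x ^ (-α)) 1 :=
        Real.continuousAt_rpow_const 1 (-α) (Or.inl one_ne_zero)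
      have c2 : ContinuousAt (fun x : ℝ => 1 - (1 - x) ^ α) 1 := by
        apply ContinuousAt.sub continuousAt_const
        apply ContinuousAt.rpow_const (by fun_prop)
        right; exact hα.le
      exact ((c1.mul c2).neg).div_const α
    have := hGcont.tendsto.comp hbto
    have hG1 : G 1 = -(1/α) := by
      simp only [hG]
      rw [sub_self, Real.zero_rpow (ne_of_gt hα), Real.one_rpow]
      ring
    rw [hG1] at this
    exact this
  have hlim2 : Filter.Tendsto (fun n => ∫ u in Set.Icc (a n) (b n), f u)
      Filter.atTop (nhds (-(1/α))) := by
    have := hGb.sub hGa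
    rw [sub_zero] at this
    exact Filter.Tendsto.congr (fun n => (hInt n).symm) this
  exact tendsto_nhds_unique htend hlim2

lemma beta_part (α : ℝ) (hα : 0 < α) (hα1 : α < 1) :
    ∫ u in Set.Ioo (0:ℝ) 1, u ^ (-α) * (1 - u) ^ (α - 1) = π / Real.sin (π * α) := by
  have h01 : (0:ℝ) ≤ 1 := by norm_num
  -- the interval integral
  set I : ℝ := ∫ x in (0:ℝ)..1, x ^ (-α) * (1 - x) ^ (α - 1) with hI
  have hIoo : ∫ u in Set.Ioo (0:ℝ) 1, u ^ (-α) * (1 - u) ^ (α - 1) = I := by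
    rw [hI, intervalIntegral.integral_of_le h01, ← MeasureTheory.integral_Ioc_eq_integral_Ioo]
  -- relate to the complex Beta integral
  have hbeta : Complex.betaIntegral ((1 - α : ℝ) : ℂ) ((α : ℝ) : ℂ) = (I : ℂ) := by
    rw [Complex.betaIntegral, hI, ← intervalIntegral.integral_ofReal]
    apply intervalIntegral.integral_congr
    intro x hx
    rw [Set.uIcc_of_le h01] at hx
    have hx0 : (0:ℝ) ≤ x := hx.1
    have hx1 : (0:ℝ) ≤ 1 - x := by linarith [hx.2]
    push_cast
    rw [Complex.ofReal_cpow hx0, Complex.ofReal_cpow hx1]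
    push_cast
    ring_nf
  -- Gamma product formula
  have h1 : (0:ℝ) < 1 - α := by linarith
  have hGG := Complex.Gamma_mul_Gamma_eq_betaIntegral
    (s := ((1 - α : ℝ) : ℂ)) (t := ((α : ℝ) : ℂ)) (by simpa using h1) (by simpa using hα)
  have hsum : ((1 - α : ℝ) : ℂ) + ((α : ℝ) : ℂ) = 1 := by push_cast; ring
  rw [hsum, Complex.Gamma_one, one_mul, hbeta, Complex.Gamma_ofReal, Complex.Gamma_ofReal,
    ← Complex.ofReal_mul] at hGG
  have hreal : Real.Gamma (1 - α) * Real.Gamma α = I := Complex.ofReal_inj.1 hGG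
  rw [hIoo, ← hreal, mul_comm, Real.Gamma_mul_Gamma_one_sub]

end KernelAux

open KernelAux in
/-- The kernel `K(t) = (sin(απ)/π) · (t₊^α − (t−1)₊^α)/t` is positive on `(0,∞)`
and integrates to `1` over `(0,∞)`, for `α ∈ (0,1)`. -/
theorem kernel_positive_and_integral_one
    (α : ℝ) (hα : 0 < α) (hα1 : α < 1) :
    (∀ t : ℝ, 0 < t →
      0 < (Real.sin (α * Real.pi) / Real.pi) *
        ((max t 0) ^ α - (max (t - 1) 0) ^ α) / t) ∧
    ∫ t in Set.Ioi (0 : ℝ),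
        (Real.sin (α * Real.pi) / Real.pi) *
          ((max t 0) ^ α - (max (t - 1) 0) ^ α) / t = 1 := by
  have hsin : 0 < Real.sin (α * π) :=
    Real.sin_pos_of_pos_of_lt_pi (by positivity) (by nlinarith [Real.pi_pos])
  have hc : 0 < Real.sin (α * π) / π := div_pos hsin Real.pi_pos
  set c : ℝ := Real.sin (α * π) / π with hcdef
  constructor
  · intro t ht
    have hmax1 : max t 0 = t := max_eq_left ht.le
    have hmax2 : max (t - 1) 0 < t := max_lt (by linarith) ht
    have hlt : (max (t - 1) 0) ^ α < t ^ α :=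
      Real.rpow_lt_rpow (le_max_right _ _) hmax2 hα
    rw [hmax1]
    exact div_pos (mul_pos hc (by linarith)) ht
  · -- the integral
    set g1 : ℝ → ℝ := fun u => u ^ (-α - 1) * (1 - (1 - u) ^ α) with hg1
    set g2 : ℝ → ℝ := fun u => u ^ (-α) * (1 - u) ^ (α - 1) with hg2
    set K : ℝ → ℝ := fun t => c * ((max t 0) ^ α - (max (t - 1) 0) ^ α) / t with hK
    -- value of K on (0,1]
    have hK1 : ∀ t ∈ Set.Ioc (0:ℝ) 1, K t = c * t ^ (α - 1) := by
      intro t ht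
      have h1 : max t 0 = t := max_eq_left ht.1.le
      have h2 : max (t - 1) 0 = 0 := max_eq_right (by linarith [ht.2])
      simp only [hK, h1, h2, Real.zero_rpow (ne_of_gt hα), sub_zero]
      rw [Real.rpow_sub ht.1, Real.rpow_one, mul_div_assoc]
    -- value of K on (1,∞)
    have hK2 : ∀ t ∈ Set.Ioi (1:ℝ), K t = c * ((t ^ α - (t - 1) ^ α) / t) := by
      intro t ht
      have ht0 : (0:ℝ) < t := lt_trans zero_lt_one ht
      have h1 : max t 0 = t := max_eq_left ht0.le
      have h2 : max (t - 1) 0 = t - 1 := max_eq_left (by linarith [Set.mem_Ioi.1 ht])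
      simp only [hK, h1, h2, mul_div_assoc]
    -- the substitution t ↦ 1/t on (1,∞)
    have hderiv : ∀ x ∈ Set.Ioi (1:ℝ),
        HasDerivWithinAt (fun t : ℝ => t⁻¹) (-(x^2)⁻¹) (Set.Ioi 1) x := fun x hx =>
      (hasDerivAt_inv (ne_of_gt (lt_trans zero_lt_one hx))).hasDerivWithinAt
    have hinj : Set.InjOn (fun t : ℝ => t⁻¹) (Set.Ioi 1) := fun a _ b _ h => inv_injective h
    have himg : (fun t : ℝ => t⁻¹) '' Set.Ioi 1 = Set.Ioo 0 1 := by
      ext y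
      constructor
      · rintro ⟨t, ht, rfl⟩
        have ht1 : (1:ℝ) < t := ht
        have ht0 : (0:ℝ) < t := lt_trans zero_lt_one ht1
        exact ⟨inv_pos.2 ht0, inv_lt_one_of_one_lt₀ ht1⟩
      · rintro ⟨hy0, hy1⟩
        refine ⟨y⁻¹, ?_, inv_inv y⟩
        exact Set.mem_Ioi.2 (one_lt_inv_iff₀.2 ⟨hy0, hy1⟩)
    -- pointwise identity on (1,∞)
    have hptw : ∀ x ∈ Set.Ioi (1:ℝ),
        |(-(x^2)⁻¹)| • g1 x⁻¹ = (x ^ α - (x - 1) ^ α) / x := by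
      intro x hx
      have hx1 : (1:ℝ) < x := hx
      have hx0 : (0:ℝ) < x := lt_trans zero_lt_one hx1
      have hA : (0:ℝ) < x ^ α := Real.rpow_pos_of_pos hx0 α
      have e1 : (x⁻¹) ^ (-α - 1) = x ^ α * x := by
        rw [Real.inv_rpow hx0.le, ← Real.rpow_neg hx0.le,
          show -(-α - 1) = α + 1 by ring, Real.rpow_add hx0, Real.rpow_one]
      have e2 : (1 - x⁻¹) ^ α = (x - 1) ^ α * (x ^ α)⁻¹ := by
        rw [show (1 - x⁻¹) = (x - 1) * x⁻¹ by field_simp,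
          Real.mul_rpow (by linarith) (inv_nonneg.2 hx0.le), Real.inv_rpow hx0.le]
      have habs : |(-(x^2)⁻¹)| = (x^2)⁻¹ := by
        rw [abs_neg, abs_of_pos (by positivity)]
      rw [smul_eq_mul, habs]
      simp only [hg1, e1, e2]
      field_simp
    have hsubst := integral_image_eq_integral_abs_deriv_smul measurableSet_Ioi hderiv hinj g1
    rw [himg] at hsubst
    -- integrability of K on the two pieces
    have hrpowint : IntegrableOn (fun t : ℝ => t ^ (α - 1)) (Set.Ioc 0 1) :=
      (intervalIntegral.intervalIntegrable_rpow' (a := 0) (b := 1)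
        (by linarith : (-1:ℝ) < α - 1)).1
    have hKint1 : IntegrableOn K (Set.Ioc 0 1) := by
      refine IntegrableOn.congr_fun ((hrpowint.const_mul c)) ?_ measurableSet_Ioc
      intro t ht
      exact (hK1 t ht).symm
    have hKint2 : IntegrableOn K (Set.Ioi 1) := by
      have h1 : IntegrableOn (fun x : ℝ => |(-(x^2)⁻¹)| • g1 x⁻¹) (Set.Ioi 1) := by
        refine (integrableOn_image_iff_integrableOn_abs_deriv_smul
          measurableSet_Ioi hderiv hinj g1).1 ?_
        rw [himg]
        exact g1_integrable α hα hα1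
      refine IntegrableOn.congr_fun (h1.const_mul c) ?_ measurableSet_Ioi
      intro x hx
      rw [hK2 x hx, ← hptw x hx]
    -- split the integral
    have hsplit : ∫ t in Set.Ioi (0:ℝ), K t
        = (∫ t in Set.Ioc (0:ℝ) 1, K t) + ∫ t in Set.Ioi (1:ℝ), K t := by
      rw [← MeasureTheory.setIntegral_union (Set.Ioc_disjoint_Ioi le_rfl)
        measurableSet_Ioi hKint1 hKint2, Set.Ioc_union_Ioi_eq_Ioi zero_le_one]
    -- first piece
    have hpiece1 : ∫ t in Set.Ioc (0:ℝ) 1, K t = c * (1/α) := by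
      rw [MeasureTheory.setIntegral_congr_fun measurableSet_Ioc hK1,
        MeasureTheory.integral_const_mul]
      have : ∫ t in Set.Ioc (0:ℝ) 1, t ^ (α - 1)
          = ∫ t in (0:ℝ)..1, t ^ (α - 1) := by
        rw [intervalIntegral.integral_of_le zero_le_one]
      rw [this, integral_rpow (Or.inl (by linarith : (-1:ℝ) < α - 1))]
      have hone : α - 1 + 1 = α := by ring
      rw [hone, Real.one_rpow, Real.zero_rpow (ne_of_gt hα)]
      norm_num
    -- second piece
    have hpiece2 : ∫ t in Set.Ioi (1:ℝ), K t = c * (-(1/α) + π / Real.sin (π * α)) := by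
      have e1 : ∫ t in Set.Ioi (1:ℝ), K t
          = c * ∫ x in Set.Ioi (1:ℝ), |(-(x^2)⁻¹)| • g1 x⁻¹ := by
        rw [← MeasureTheory.integral_const_mul]
        refine MeasureTheory.setIntegral_congr_fun measurableSet_Ioi ?_
        intro x hx
        rw [hK2 x hx, ← hptw x hx]
      rw [e1, ← hsubst]
      congr 1
      have hftc := ftc_part α hα hα1
      have hbeta := beta_part α hα hα1
      have hsub2 := MeasureTheory.integral_sub (g1_integrable α hα hα1) (g2_integrable α hα hα1)
      simp only [hg1, hg2] at *
      linarith [hftc, hbeta, hsub2]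
    rw [hsplit, hpiece1, hpiece2]
    have hsin' : Real.sin (π * α) = Real.sin (α * π) := by rw [mul_comm]
    rw [hsin']
    have hcomb : c * (1/α) + c * (-(1/α) + π / Real.sin (α*π)) = c * (π / Real.sin (α*π)) := by
      ring
    rw [hcomb, hcdef]
    field_simp
end

section
/- For α ∈ (0,1), r > 0, ε ∈ (0,r), and n ≥ 1 a natural number, the following identity of the Kipriyanov construction holds: (1/ε^α) ∫_0^r g(y)(r−y)^{α−1} y^{n−1} dy − α ∫_ε^r (r−y)^{α−1} dy ∫_0^{y−ε} g(t) t^{n−1} (y−t)^{−α−1} dt = (1/ε^α) ∫_0^{r} g(t) t^{n−1} [(r−t)^α − (r−t−ε)₊^α]/(r−t) dt, for every bounded measurable g on [0,r]. -/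
open MeasureTheory Real

section KipriyanovHelpers
open Set intervalIntegral

section helpers

lemma kip_rpow_II {α r a b : ℝ} (hα : 0 < α) :
    IntervalIntegrable (fun y => (r - y) ^ (α - 1)) volume a b := by
  have h := (intervalIntegrable_rpow' (r := α - 1) (by linarith) (a := r - a)
      (b := r - b)).comp_sub_left r
  simpa using h

lemma kip_inner_eval {α ε r t : ℝ} (hα : 0 < α) (hε : 0 < ε) (ht : t + ε < r) :
    ∫ y in (t+ε)..r, (r - y) ^ (α - 1) * (y - t) ^ (-α - 1) =
      (r - t - ε) ^ α / (α * ε ^ α * (r - t)) := by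
  have hrt : (0:ℝ) < r - t := by linarith
  set F : ℝ → ℝ := fun y => -(1 / (α * (r - t))) * ((r - y) ^ α * (y - t) ^ (-α)) with hF
  have hderiv : ∀ x ∈ Ioo (t + ε) r,
      HasDerivAt F ((r - x) ^ (α - 1) * (x - t) ^ (-α - 1)) x := by
    intro x hx
    have h1 : (0:ℝ) < r - x := by linarith [hx.2]
    have h2 : (0:ℝ) < x - t := by linarith [hx.1]
    have d1 : HasDerivAt (fun y : ℝ => (r - y) ^ α) (α * (r - x) ^ (α - 1) * (-1)) x := by
      have := (Real.hasDerivAt_rpow_const (x := r - x) (p := α) (Or.inl h1.ne')).comp x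
        (((hasDerivAt_id x).const_sub r))
      simpa [Function.comp_def] using this
    have d2 : HasDerivAt (fun y : ℝ => (y - t) ^ (-α)) (-α * (x - t) ^ (-α - 1) * 1) x := by
      have := (Real.hasDerivAt_rpow_const (x := x - t) (p := -α) (Or.inl h2.ne')).comp x
        ((hasDerivAt_id x).sub_const t)
      simpa [Function.comp_def] using this
    have : HasDerivAt F _ x := ((d1.mul d2).const_mul (-(1 / (α * (r - t)))))
    convert this using 1
    have ha : (r - x) ^ α = (r - x) ^ (α - 1) * (r - x) := by
      rw [← Real.rpow_add_one h1.ne' (α - 1)]; ring_nf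
    have hb : (x - t) ^ (-α) = (x - t) ^ (-α - 1) * (x - t) := by
      rw [← Real.rpow_add_one h2.ne' (-α - 1)]; ring_nf
    rw [ha, hb]
    field_simp
    ring
  have hint : IntervalIntegrable (fun y => (r - y) ^ (α - 1) * (y - t) ^ (-α - 1))
      volume (t + ε) r := by
    apply (kip_rpow_II hα).mul_continuousOn
    apply ContinuousOn.rpow_const
    · exact (continuousOn_id.sub continuousOn_const)
    · intro y hy
      rw [uIcc_of_le (by linarith)] at hy
      exact Or.inl (ne_of_gt (by nlinarith [hy.1]))
  have hFa : Filter.Tendsto F (nhdsWithin (t+ε) (Ioi (t+ε))) (nhds (F (t+ε))) := by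
    have : ContinuousAt F (t+ε) := by
      apply ContinuousAt.mul continuousAt_const
      apply ContinuousAt.mul
      · exact ((continuousAt_const.sub continuousAt_id).rpow_const (Or.inl (sub_ne_zero.mpr (fun h => by simp only [id_eq] at h; nlinarith))))
      · exact ((continuousAt_id.sub continuousAt_const).rpow_const (Or.inl (sub_ne_zero.mpr (fun h => by simp only [id_eq] at h; nlinarith))))
    exact this.continuousWithinAt.tendsto
  have hFb : Filter.Tendsto F (nhdsWithin r (Iio r)) (nhds 0) := by
    have : ContinuousAt F r := by
      apply ContinuousAt.mul continuousAt_const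
      apply ContinuousAt.mul
      · have : ContinuousAt (fun z : ℝ => z ^ α) (r - r) :=
          Real.continuousAt_rpow_const _ _ (Or.inr hα.le)
        exact this.comp (continuousAt_const.sub continuousAt_id)
      · exact ((continuousAt_id.sub continuousAt_const).rpow_const (Or.inl (sub_ne_zero.mpr (fun h => by simp only [id_eq] at h; nlinarith))))
    have h0 : F r = 0 := by
      simp [hF, Real.zero_rpow hα.ne']
    rw [← h0]
    exact this.continuousWithinAt.tendsto
  rw [intervalIntegral.integral_eq_sub_of_hasDerivAt_of_tendsto (by linarith) hderiv hint hFa hFb]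
  have he : ε ^ α ≠ 0 := (Real.rpow_pos_of_pos hε α).ne'
  have h1 : r - (t + ε) = r - t - ε := by ring
  have h2 : t + ε - t = ε := by ring
  simp only [hF, h1, h2, Real.rpow_neg hε.le]
  field_simp
  ring

variable {α ε r : ℝ}

lemma kip_II_of_bdd {f : ℝ → ℝ} {a b C : ℝ} (hm : Measurable f)
    (hC : ∀ x ∈ Set.uIoc a b, |f x| ≤ C) : IntervalIntegrable f volume a b := by
  rw [intervalIntegrable_iff]
  haveI : IsFiniteMeasure (volume.restrict (Set.uIoc a b)) :=
    ⟨by rw [Measure.restrict_apply_univ]; exact measure_Ioc_lt_top⟩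
  refine Integrable.mono' (integrable_const C) hm.aestronglyMeasurable ?_
  refine (ae_restrict_iff' measurableSet_uIoc).mpr (Filter.Eventually.of_forall ?_)
  exact fun x hx => by simpa [Real.norm_eq_abs] using hC x hx

lemma kip_comp_fst {μ ν : Measure ℝ} [SFinite ν] [IsFiniteMeasure ν] {f : ℝ → ℝ}
    (hm : Measurable f) (hf : Integrable f μ) :
    Integrable (fun p : ℝ × ℝ => f p.1) (μ.prod ν) := by
  refine (integrable_prod_iff ((hm.comp measurable_fst).aestronglyMeasurable)).mpr ⟨?_, ?_⟩
  · exact Filter.Eventually.of_forall fun x => integrable_const ((f ∘ Prod.fst) (x, 0))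
  · simp only [Function.comp, MeasureTheory.integral_const, smul_eq_mul]
    exact hf.norm.const_mul _

end helpers

end KipriyanovHelpers

section KipriyanovMain
open Set intervalIntegral

/-- The Fubini-type identity of the Kipriyanov construction: for bounded
measurable `g`, `α ∈ (0,1)`, `0 < ε < r` and `n ≥ 1`,
`(1/ε^α)∫_0^r g(y)(r−y)^{α−1}y^{n−1} dy − α∫_ε^r (r−y)^{α−1}∫_0^{y−ε} g(t)t^{n−1}(y−t)^{−α−1} dt dy`
equals `(1/ε^α)∫_0^r g(t)t^{n−1}[(r−t)^α − (r−t−ε)₊^α]/(r−t) dt`. -/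
theorem kipriyanov_fubini_identity
    (α ε r : ℝ) (n : ℕ) (hn : 1 ≤ n)
    (hα : 0 < α) (hα1 : α < 1) (hε : 0 < ε) (hεr : ε < r)
    (g : ℝ → ℝ) (hg : Measurable g) (hbd : ∃ M : ℝ, ∀ t, |g t| ≤ M) :
    (1 / ε ^ α) * (∫ y in (0:ℝ)..r, g y * (r - y) ^ (α - 1) * y ^ (n - 1)) -
        α * ∫ y in ε..r, (r - y) ^ (α - 1) *
          ∫ t in (0:ℝ)..(y - ε), g t * t ^ (n - 1) * (y - t) ^ (-α - 1) =
      (1 / ε ^ α) * ∫ t in (0:ℝ)..r,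
        g t * t ^ (n - 1) * (((r - t) ^ α - (max (r - t - ε) 0) ^ α) / (r - t)) := by
  obtain ⟨M, hM⟩ := hbd
  have hM0 : 0 ≤ M := le_trans (abs_nonneg _) (hM 0)
  have hr : (0:ℝ) < r := lt_trans hε hεr
  have hεα : (0:ℝ) < ε ^ α := Real.rpow_pos_of_pos hε α
  set φ : ℝ → ℝ := fun t => g t * t ^ (n - 1) with hφ
  have hφm : Measurable φ := hg.mul (measurable_id.pow_const _)
  have hφbd : ∀ t ∈ Icc (0:ℝ) r, |φ t| ≤ M * r ^ (n - 1) := by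
    intro t ht
    rw [hφ]
    calc |g t * t ^ (n-1)| = |g t| * |t| ^ (n-1) := by rw [abs_mul, abs_pow]
    _ ≤ M * r ^ (n-1) := by
        apply mul_le_mul (hM t) _ (by positivity) hM0
        rw [abs_of_nonneg ht.1]; exact pow_le_pow_left₀ ht.1 ht.2 _
  set K : ℝ × ℝ → ℝ := fun p =>
    if p.2 ≤ p.1 - ε then (r - p.1) ^ (α - 1) * (φ p.2 * (p.1 - p.2) ^ (-α - 1)) else 0 with hK
  set μ := volume.restrict (Ioc ε r) with hμ
  set ν := volume.restrict (Ioc (0:ℝ) (r - ε)) with hν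
  haveI : IsFiniteMeasure ν := ⟨by rw [hν, Measure.restrict_apply_univ]; exact measure_Ioc_lt_top⟩
  have hKm : Measurable K := by
    refine Measurable.ite (measurableSet_le measurable_snd
      ((measurable_fst.sub_const ε))) ?_ measurable_const
    exact ((measurable_const.sub measurable_fst).pow measurable_const).mul
      (((hφm.comp measurable_snd)).mul ((measurable_fst.sub measurable_snd).pow measurable_const))
  have hf1 : Integrable (fun y => (r - y) ^ (α - 1)) μ := by
    have h := (kip_rpow_II (r := r) (a := ε) (b := r) hα)
    rw [intervalIntegrable_iff, uIoc_of_le hεr.le] at h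
    exact h
  have hKint : Integrable K (μ.prod ν) := by
    refine Integrable.mono'
      ((kip_comp_fst ((measurable_const.sub measurable_id).pow measurable_const)
        hf1).const_mul (M * r ^ (n - 1) * ε ^ (-α - 1))) hKm.aestronglyMeasurable ?_
    rw [hμ, hν, Measure.prod_restrict]
    filter_upwards [ae_restrict_mem (measurableSet_Ioc.prod measurableSet_Ioc)] with p hp
    obtain ⟨hp1, hp2⟩ := hp
    simp only [mem_Ioc] at hp1 hp2
    have hry : (0:ℝ) ≤ r - p.1 := by linarith [hp1.2]
    have hGnn : (0:ℝ) ≤ (r - p.1) ^ (α - 1) := Real.rpow_nonneg hry _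
    rw [hK]
    by_cases h : p.2 ≤ p.1 - ε
    · simp only [if_pos h, Real.norm_eq_abs]
      have hyt : ε ≤ p.1 - p.2 := by linarith
      have hytpos : (0:ℝ) < p.1 - p.2 := lt_of_lt_of_le hε hyt
      rw [abs_mul, abs_mul, abs_of_nonneg hGnn,
        abs_of_nonneg (Real.rpow_nonneg hytpos.le _)]
      have h1 : |φ p.2| ≤ M * r ^ (n - 1) :=
        hφbd p.2 ⟨hp2.1.le, by linarith [hp2.2]⟩
      have h2 : (p.1 - p.2) ^ (-α - 1) ≤ ε ^ (-α - 1) :=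
        Real.rpow_le_rpow_of_nonpos hε hyt (by linarith)
      calc (r - p.1) ^ (α - 1) * (|φ p.2| * (p.1 - p.2) ^ (-α - 1))
          ≤ (r - p.1) ^ (α - 1) * ((M * r ^ (n - 1)) * ε ^ (-α - 1)) := by
            apply mul_le_mul_of_nonneg_left _ hGnn
            exact mul_le_mul h1 h2 (Real.rpow_nonneg hytpos.le _) (by positivity)
      _ = M * r ^ (n - 1) * ε ^ (-α - 1) * (r - p.1) ^ (α - 1) := by ring
    · simp only [if_neg h, norm_zero]
      positivity
  have hB1 : (∫ y in ε..r, (r - y) ^ (α - 1) *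
        ∫ t in (0:ℝ)..(y - ε), g t * t ^ (n - 1) * (y - t) ^ (-α - 1))
      = ∫ y, (∫ t, K (y, t) ∂ν) ∂μ := by
    rw [intervalIntegral.integral_of_le hεr.le]
    refine setIntegral_congr_fun measurableSet_Ioc fun y hy => ?_
    simp only [mem_Ioc] at hy
    have h0y : (0:ℝ) ≤ y - ε := by linarith [hy.1]
    rw [← intervalIntegral.integral_const_mul, intervalIntegral.integral_of_le h0y]
    have hset : Ioc (0:ℝ) (y - ε) = Ioc (0:ℝ) (r - ε) ∩ Iic (y - ε) := by
      rw [Ioc_inter_Iic, min_eq_right (by linarith [hy.2])]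
    rw [hset, ← setIntegral_indicator measurableSet_Iic]
    refine setIntegral_congr_fun measurableSet_Ioc fun t _ => ?_
    by_cases h : t ≤ y - ε
    · simp only [indicator_apply, mem_Iic, if_pos h, hK, hφ]
    · simp only [indicator_apply, mem_Iic, if_neg h, hK, if_neg h]
  have hswap : (∫ y, (∫ t, K (y, t) ∂ν) ∂μ) = ∫ t, (∫ y, K (y, t) ∂μ) ∂ν :=
    MeasureTheory.integral_integral_swap hKint
  have hB2 : (∫ t, (∫ y, K (y, t) ∂μ) ∂ν)
      = ∫ t in Ioc (0:ℝ) (r - ε), φ t * ((r - t - ε) ^ α / (α * ε ^ α * (r - t))) := by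
    rw [hν]
    refine setIntegral_congr_fun measurableSet_Ioc fun t ht => ?_
    simp only [mem_Ioc] at ht
    have htr : t + ε ≤ r := by linarith [ht.2]
    have hS : MeasurableSet {y : ℝ | t ≤ y - ε} :=
      measurableSet_le measurable_const (measurable_id.sub_const ε)
    have hKind : (fun y => K (y, t))
        = ({y : ℝ | t ≤ y - ε}).indicator
          (fun y => (r - y) ^ (α - 1) * (φ t * (y - t) ^ (-α - 1))) := by
      funext y
      by_cases h : t ≤ y - ε
      · simp only [hK, indicator_apply, mem_setOf_eq, if_pos h]
      · simp only [hK, indicator_apply, mem_setOf_eq, if_neg h]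
    rw [hμ, hKind, setIntegral_indicator hS]
    have hset : Ioc ε r ∩ {y : ℝ | t ≤ y - ε} = Icc (t + ε) r := by
      ext y
      simp only [mem_inter_iff, mem_Ioc, mem_setOf_eq, mem_Icc]
      constructor
      · rintro ⟨⟨_, h2⟩, h3⟩; exact ⟨by linarith, h2⟩
      · rintro ⟨h1, h2⟩; exact ⟨⟨by linarith [ht.1], h2⟩, by linarith⟩
    rw [hset, integral_Icc_eq_integral_Ioc, ← intervalIntegral.integral_of_le htr]
    have hpull : (∫ y in (t+ε)..r, (r - y) ^ (α - 1) * (φ t * (y - t) ^ (-α - 1)))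
        = φ t * ∫ y in (t+ε)..r, (r - y) ^ (α - 1) * (y - t) ^ (-α - 1) := by
      rw [← intervalIntegral.integral_const_mul]
      refine intervalIntegral.integral_congr fun y _ => by ring
    rw [hpull]
    rcases lt_or_eq_of_le htr with hlt | heq
    · rw [kip_inner_eval hα hε hlt]
    · rw [heq, intervalIntegral.integral_same, show r - t - ε = 0 by linarith,
        Real.zero_rpow hα.ne', zero_div, mul_zero]
  have hDm : Measurable (fun t => φ t * ((max (r - t - ε) 0) ^ α / (r - t))) := by
    refine hφm.mul ?_
    exact ((((measurable_const.sub measurable_id).sub_const ε).max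
      measurable_const).pow measurable_const).div (measurable_const.sub measurable_id)
  have hDI : ∀ a b : ℝ, 0 ≤ a → a ≤ r → 0 ≤ b → b ≤ r →
      IntervalIntegrable (fun t => φ t * ((max (r - t - ε) 0) ^ α / (r - t)))
        volume a b := by
    intro a b ha har hb hbr
    refine kip_II_of_bdd hDm (C := M * r ^ (n - 1) * (r ^ α / ε)) fun x hx => ?_
    have hx' : x ∈ Ioc 0 r := by
      rcases le_total a b with h | h
      · rw [uIoc_of_le h] at hx; exact ⟨lt_of_le_of_lt ha hx.1, le_trans hx.2 hbr⟩
      · rw [uIoc_of_ge h] at hx; exact ⟨lt_of_le_of_lt hb hx.1, le_trans hx.2 har⟩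
    by_cases hc : x ≤ r - ε
    · have hrx : ε ≤ r - x := by linarith
      have hrx0 : (0:ℝ) < r - x := lt_of_lt_of_le hε hrx
      have hm0 : (0:ℝ) ≤ max (r - x - ε) 0 := le_max_right _ _
      have hmr : max (r - x - ε) 0 ≤ r := max_le (by linarith [hx'.1]) hr.le
      rw [abs_mul, abs_of_nonneg (div_nonneg (Real.rpow_nonneg hm0 _) hrx0.le)]
      refine mul_le_mul (hφbd x ⟨hx'.1.le, hx'.2⟩) ?_
        (div_nonneg (Real.rpow_nonneg hm0 _) hrx0.le) (by positivity)
      exact div_le_div₀ (by positivity) (Real.rpow_le_rpow hm0 hmr hα.le) hε hrx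
    · rw [max_eq_right (by linarith), Real.zero_rpow hα.ne', zero_div, mul_zero, abs_zero]
      positivity
  have hD1 : IntervalIntegrable (fun t => φ t * ((max (r - t - ε) 0) ^ α / (r - t)))
      volume 0 r := hDI 0 r le_rfl hr.le hr.le le_rfl
  have hD : (∫ t in Ioc (0:ℝ) (r - ε), φ t * ((r - t - ε) ^ α / (α * ε ^ α * (r - t))))
      = (1 / (α * ε ^ α)) * ∫ t in (0:ℝ)..r, φ t * ((max (r - t - ε) 0) ^ α / (r - t)) := by
    have h0rε : (0:ℝ) ≤ r - ε := by linarith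
    have step1 : (∫ t in Ioc (0:ℝ) (r - ε), φ t * ((r - t - ε) ^ α / (α * ε ^ α * (r - t))))
        = ∫ t in Ioc (0:ℝ) (r - ε),
            (1 / (α * ε ^ α)) * (φ t * ((max (r - t - ε) 0) ^ α / (r - t))) := by
      refine setIntegral_congr_fun measurableSet_Ioc fun t ht => ?_
      simp only [mem_Ioc] at ht
      have h1 : r - t ≠ 0 := by intro h; nlinarith [ht.2]
      rw [max_eq_left (by linarith [ht.2])]
      field_simp
    have hzero : (∫ t in (r - ε)..r, φ t * ((max (r - t - ε) 0) ^ α / (r - t))) = 0 := by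
      have : (∫ t in (r - ε)..r, φ t * ((max (r - t - ε) 0) ^ α / (r - t)))
          = ∫ _t in (r - ε)..r, (0:ℝ) := by
        refine intervalIntegral.integral_congr fun t ht => ?_
        rw [uIcc_of_le (by linarith)] at ht
        rw [max_eq_right (by linarith [ht.1]), Real.zero_rpow hα.ne', zero_div, mul_zero]
      rw [this]; simp
    rw [step1, MeasureTheory.integral_const_mul]
    congr 1
    rw [← intervalIntegral.integral_of_le h0rε,
      ← integral_add_adjacent_intervals (hDI 0 (r - ε) le_rfl hr.le h0rε (by linarith))
        (hDI (r - ε) r h0rε (by linarith) hr.le le_rfl), hzero, add_zero]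
  have hA : (∫ y in (0:ℝ)..r, g y * (r - y) ^ (α - 1) * y ^ (n - 1))
      = ∫ t in (0:ℝ)..r, φ t * ((r - t) ^ α / (r - t)) := by
    refine intervalIntegral.integral_congr fun t ht => ?_
    rw [uIcc_of_le hr.le] at ht
    rcases eq_or_lt_of_le ht.2 with heq | hlt
    · rw [heq]
      simp [sub_self, Real.zero_rpow (show α - 1 ≠ 0 by intro h; linarith),
        Real.zero_rpow hα.ne']
    · rw [Real.rpow_sub_one (by intro h; nlinarith : r - t ≠ 0), hφ]
      ring
  have hA' : IntervalIntegrable (fun t => φ t * ((r - t) ^ α / (r - t))) volume 0 r := by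
    have h1 : IntervalIntegrable (fun t => φ t * (r - t) ^ (α - 1)) volume 0 r := by
      have h2 := kip_rpow_II (r := r) (a := 0) (b := r) hα
      rw [intervalIntegrable_iff, uIoc_of_le hr.le] at h2 ⊢
      refine Integrable.bdd_mul (c := M * r ^ (n - 1)) h2 hφm.aestronglyMeasurable ?_
      filter_upwards [ae_restrict_mem measurableSet_Ioc] with x hx
      simpa [Real.norm_eq_abs] using hφbd x ⟨hx.1.le, hx.2⟩
    refine h1.congr_ae ?_
    have hae : ∀ᵐ (x : ℝ) ∂(volume : Measure ℝ), x ≠ r := by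
      rw [ae_iff]
      simpa only [ne_eq, not_not, setOf_eq_eq_singleton] using measure_singleton r
    refine Filter.EventuallyEq.restrict ?_
    filter_upwards [hae] with x hx
    rw [Real.rpow_sub_one (sub_ne_zero.mpr (Ne.symm hx))]
  have hC : (∫ t in (0:ℝ)..r,
        g t * t ^ (n - 1) * (((r - t) ^ α - (max (r - t - ε) 0) ^ α) / (r - t)))
      = (∫ t in (0:ℝ)..r, φ t * ((r - t) ^ α / (r - t)))
        - ∫ t in (0:ℝ)..r, φ t * ((max (r - t - ε) 0) ^ α / (r - t)) := by
    rw [← intervalIntegral.integral_sub hA' hD1]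
    apply intervalIntegral.integral_congr
    intro t ht
    simp only [hφ]
    rw [sub_div]
    ring
  rw [hA, hB1, hswap, hB2, hD, hC]
  field_simp

end KipriyanovMain
end
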